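/- Let h : S² → ℝ be Lipschitz in the sense that |h(x) − h(y)| ≤ L|x−y| for all x, y ∈ S², let α ∈ ℝ³ with |α| < 1/4, sup|h| ≤ 1/6, and for ξ ∈ S² define φ(x) = (r(x)ξ − α)/(1+h(x)) where r(x) = ⟨ξ,α⟩ + √(⟨ξ,α⟩² − |α|² + (1+h(x))²). Then |φ(x)| = 1 for all x ∈ S², |r(x) − r(y)| ≤ 3|h(x) − h(y)|, and |φ(x) − φ(y)| ≤ 6|h(x) − h(y)| ≤ 6L|x−y| for all x, y ∈ S². In particular, if 6L < 1 then φ is a contraction on S² and has a unique fixed point. -/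

import Mathlib

noncomputable def rfun (α ξ : EuclideanSpace ℝ (Fin 3)) (h : EuclideanSpace ℝ (Fin 3) → ℝ)
    (x : EuclideanSpace ℝ (Fin 3)) : ℝ :=
  (inner ℝ ξ α : ℝ) + Real.sqrt ((inner ℝ ξ α : ℝ)^2 - ‖α‖^2 + (1 + h x)^2)

noncomputable def phifun (α ξ : EuclideanSpace ℝ (Fin 3)) (h : EuclideanSpace ℝ (Fin 3) → ℝ)
    (x : EuclideanSpace ℝ (Fin 3)) : EuclideanSpace ℝ (Fin 3) :=
  (1 + h x)⁻¹ • (rfun α ξ h x • ξ - α)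

lemma aux_sqrtlip {u v tx ty : ℝ} (hu : 3/4 ≤ u) (hv : 3/4 ≤ v)
    (huv : u^2 - v^2 = (tx + ty) * (tx - ty)) (htx2 : tx ≤ 7/6)
    (hty1 : 5/6 ≤ ty) (hty2 : ty ≤ 7/6) (htx1 : 5/6 ≤ tx) : |u - v| ≤ (14/9) * |tx - ty| := by
  have h1 : |u - v| * (u + v) = |u^2 - v^2| := by
    rw [← abs_of_nonneg (by linarith : (0:ℝ) ≤ u + v), ← abs_mul]
    congr 1; ring
  have h2 : |u^2 - v^2| ≤ (7/3) * |tx - ty| := by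
    rw [huv, abs_mul, abs_of_nonneg (by linarith : (0:ℝ) ≤ tx + ty)]
    have := mul_le_mul_of_nonneg_right (by linarith : tx + ty ≤ 7/3) (abs_nonneg (tx - ty))
    linarith
  nlinarith [abs_nonneg (u - v), abs_nonneg (tx - ty)]

lemma aux_philip {tx ty rx ry nα : ℝ} (htx1 : 5/6 ≤ tx) (htx2 : tx ≤ 7/6)
    (hty1 : 5/6 ≤ ty) (hty2 : ty ≤ 7/6) (hry1 : 1/2 ≤ ry) (hry2 : ry ≤ 3/2)
    (hnα0 : 0 ≤ nα) (hnα : nα ≤ 1/4) (hrr : |rx - ry| ≤ (14/9) * |tx - ty|) :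
    |tx⁻¹ * rx - ty⁻¹ * ry| + |tx⁻¹ - ty⁻¹| * nα ≤ 6 * |tx - ty| := by
  have htx0 : (0:ℝ) < tx := by linarith
  have hty0 : (0:ℝ) < ty := by linarith
  have hix0 : 0 < tx⁻¹ := inv_pos.mpr htx0
  have hiy0 : 0 < ty⁻¹ := inv_pos.mpr hty0
  have hixle : tx⁻¹ ≤ 6/5 := by
    rw [show (6/5:ℝ) = (5/6:ℝ)⁻¹ by norm_num]; exact inv_anti₀ (by norm_num) htx1
  have hiyle : ty⁻¹ ≤ 6/5 := by
    rw [show (6/5:ℝ) = (5/6:ℝ)⁻¹ by norm_num]; exact inv_anti₀ (by norm_num) hty1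
  have hii : tx⁻¹ - ty⁻¹ = (ty - tx) * (tx⁻¹ * ty⁻¹) := by field_simp
  have hiib : |tx⁻¹ - ty⁻¹| ≤ (36/25) * |tx - ty| := by
    rw [hii, abs_mul, abs_of_pos (mul_pos hix0 hiy0), abs_sub_comm]
    have h36 : tx⁻¹ * ty⁻¹ ≤ 36/25 := by nlinarith
    have := mul_le_mul_of_nonneg_left h36 (abs_nonneg (tx - ty))
    linarith
  have hb2 : |tx⁻¹ * rx - ty⁻¹ * ry| ≤
      (6/5) * ((14/9) * |tx - ty|) + (36/25) * |tx - ty| * (3/2) := by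
    have hsplit : tx⁻¹ * rx - ty⁻¹ * ry = tx⁻¹ * (rx - ry) + (tx⁻¹ - ty⁻¹) * ry := by ring
    rw [hsplit]
    calc |tx⁻¹ * (rx - ry) + (tx⁻¹ - ty⁻¹) * ry| ≤ |tx⁻¹ * (rx - ry)| + |(tx⁻¹ - ty⁻¹) * ry| :=
          abs_add_le _ _
      _ = tx⁻¹ * |rx - ry| + |tx⁻¹ - ty⁻¹| * |ry| := by
          rw [abs_mul, abs_mul, abs_of_pos hix0]
      _ ≤ (6/5) * ((14/9) * |tx - ty|) + (36/25) * |tx - ty| * (3/2) := by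
          have h1 : tx⁻¹ * |rx - ry| ≤ (6/5) * ((14/9) * |tx - ty|) := by
            have := mul_le_mul hixle hrr (abs_nonneg _) (by norm_num)
            linarith
          have h2 : |ry| ≤ 3/2 := by rw [abs_of_nonneg (by linarith)]; exact hry2
          have h3 : |tx⁻¹ - ty⁻¹| * |ry| ≤ (36/25) * |tx - ty| * (3/2) :=
            mul_le_mul hiib h2 (abs_nonneg _) (by positivity)
          linarith
  have hαb : |tx⁻¹ - ty⁻¹| * nα ≤ (36/25) * |tx - ty| * (1/4) :=
    mul_le_mul hiib hnα hnα0 (by positivity)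
  nlinarith [abs_nonneg (tx - ty)]

/-- With `h` bounded by `1/6` on `S²` and `L`-Lipschitz, `|α| < 1/4`, `ξ ∈ S²`:
`|φ(x)| = 1` on `S²`, `|r(x) − r(y)| ≤ 3|h(x) − h(y)|`,
`|φ(x) − φ(y)| ≤ 6|h(x) − h(y)| ≤ 6L|x−y|`, and if `6L < 1` then `φ` has a unique
fixed point on `S²`. -/
theorem stmt8 (α : EuclideanSpace ℝ (Fin 3)) (hα : ‖α‖ < 1/4)
    (h : EuclideanSpace ℝ (Fin 3) → ℝ) (hh : ∀ y : EuclideanSpace ℝ (Fin 3), ‖y‖ = 1 → |h y| ≤ 1/6)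
    (L : ℝ)
    (hL : ∀ x y : EuclideanSpace ℝ (Fin 3), ‖x‖ = 1 → ‖y‖ = 1 → |h x - h y| ≤ L * ‖x - y‖)
    (ξ : EuclideanSpace ℝ (Fin 3)) (hξ : ‖ξ‖ = 1) :
    (∀ x : EuclideanSpace ℝ (Fin 3), ‖x‖ = 1 → ‖phifun α ξ h x‖ = 1) ∧
    (∀ x y : EuclideanSpace ℝ (Fin 3), ‖x‖ = 1 → ‖y‖ = 1 →
      |rfun α ξ h x - rfun α ξ h y| ≤ 3 * |h x - h y|) ∧
    (∀ x y : EuclideanSpace ℝ (Fin 3), ‖x‖ = 1 → ‖y‖ = 1 →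
      ‖phifun α ξ h x - phifun α ξ h y‖ ≤ 6 * |h x - h y| ∧
      ‖phifun α ξ h x - phifun α ξ h y‖ ≤ 6 * L * ‖x - y‖) ∧
    (6 * L < 1 → ∃! x : EuclideanSpace ℝ (Fin 3), ‖x‖ = 1 ∧ phifun α ξ h x = x) := by
  have hα0 : (0:ℝ) ≤ ‖α‖ := norm_nonneg _
  set a : ℝ := (inner ℝ ξ α : ℝ) with ha_def
  have haa : |a| ≤ ‖α‖ := by
    have := abs_real_inner_le_norm ξ α
    simpa [ha_def, hξ] using this
  have ha1 : -(1/4) ≤ a := by have := abs_le.mp (haa.trans hα.le); linarith [this.1]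
  have ha2 : a ≤ 1/4 := by have := abs_le.mp (haa.trans hα.le); linarith [this.1, this.2]
  have ha2' : a^2 ≤ ‖α‖^2 := by
    nlinarith [haa, abs_nonneg a, sq_abs a]
  clear_value a
  -- bounds on t = 1 + h x
  have ht : ∀ x : EuclideanSpace ℝ (Fin 3), ‖x‖ = 1 →
      5/6 ≤ 1 + h x ∧ 1 + h x ≤ 7/6 := by
    intro x hx
    have := abs_le.mp (hh x hx)
    constructor <;> linarith [this.1, this.2]
  -- D bounds
  have hD : ∀ x : EuclideanSpace ℝ (Fin 3), ‖x‖ = 1 →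
      (9/16 : ℝ) ≤ a^2 - ‖α‖^2 + (1 + h x)^2 := by
    intro x hx
    have h1 := (ht x hx).1
    nlinarith [sq_nonneg a]
  have hDle : ∀ x : EuclideanSpace ℝ (Fin 3), ‖x‖ = 1 →
      a^2 - ‖α‖^2 + (1 + h x)^2 ≤ (7/6:ℝ)^2 := by
    intro x hx
    have h2 := (ht x hx).2
    have h1 := (ht x hx).1
    nlinarith
  -- sqrt bounds
  have hs : ∀ x : EuclideanSpace ℝ (Fin 3), ‖x‖ = 1 →
      (3/4 : ℝ) ≤ Real.sqrt (a^2 - ‖α‖^2 + (1 + h x)^2) ∧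
      Real.sqrt (a^2 - ‖α‖^2 + (1 + h x)^2) ≤ 7/6 := by
    intro x hx
    constructor
    · rw [Real.le_sqrt' (by norm_num)]
      calc (3/4:ℝ)^2 ≤ 9/16 := by norm_num
        _ ≤ _ := hD x hx
    · calc Real.sqrt (a^2 - ‖α‖^2 + (1 + h x)^2) ≤ Real.sqrt ((7/6:ℝ)^2) :=
          Real.sqrt_le_sqrt (hDle x hx)
        _ = 7/6 := Real.sqrt_sq (by norm_num)
  have hssq : ∀ x : EuclideanSpace ℝ (Fin 3), ‖x‖ = 1 →
      (Real.sqrt (a^2 - ‖α‖^2 + (1 + h x)^2))^2 = a^2 - ‖α‖^2 + (1 + h x)^2 := by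
    intro x hx
    exact Real.sq_sqrt (by linarith [hD x hx])
  -- r bounds
  have hr : ∀ x : EuclideanSpace ℝ (Fin 3), ‖x‖ = 1 →
      (1/2:ℝ) ≤ rfun α ξ h x ∧ rfun α ξ h x ≤ 3/2 := by
    intro x hx
    have h1 := (hs x hx).1
    have h2 := (hs x hx).2
    constructor <;> (rw [rfun]; rw [← ha_def]) <;> [linarith; linarith]
  -- key identity : ‖r • ξ - α‖ = 1 + h x
  have hnorm : ∀ x : EuclideanSpace ℝ (Fin 3), ‖x‖ = 1 →
      ‖rfun α ξ h x • ξ - α‖ = 1 + h x := by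
    intro x hx
    have hsq : ‖rfun α ξ h x • ξ - α‖^2 = (1 + h x)^2 := by
      rw [norm_sub_sq_real, real_inner_smul_left, norm_smul]
      rw [← ha_def, hξ]
      have hss := hssq x hx
      rw [rfun, ← ha_def]
      simp only [Real.norm_eq_abs, mul_one]
      rw [sq_abs]
      nlinarith [hss]
    have h1 := (ht x hx).1
    have := congrArg Real.sqrt hsq
    rwa [Real.sqrt_sq (norm_nonneg _), Real.sqrt_sq (by linarith)] at this
  -- Part 1
  have part1 : ∀ x : EuclideanSpace ℝ (Fin 3), ‖x‖ = 1 → ‖phifun α ξ h x‖ = 1 := by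
    intro x hx
    have h1 := (ht x hx).1
    rw [phifun, norm_smul, hnorm x hx, Real.norm_eq_abs, abs_inv,
      abs_of_pos (by linarith : (0:ℝ) < 1 + h x)]
    field_simp
  -- r Lipschitz (sharp)
  have keyr : ∀ x y : EuclideanSpace ℝ (Fin 3), ‖x‖ = 1 → ‖y‖ = 1 →
      |rfun α ξ h x - rfun α ξ h y| ≤ (14/9) * |h x - h y| := by
    intro x y hx hy
    have hru : rfun α ξ h x - rfun α ξ h y =
        Real.sqrt (a^2 - ‖α‖^2 + (1 + h x)^2) - Real.sqrt (a^2 - ‖α‖^2 + (1 + h y)^2) := by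
      rw [rfun, rfun, ← ha_def]; ring
    rw [hru]
    have hmain := aux_sqrtlip (hs x hx).1 (hs y hy).1
      (by rw [hssq x hx, hssq y hy]; ring) (ht x hx).2 (ht y hy).1 (ht y hy).2 (ht x hx).1
    have heq : (1 + h x) - (1 + h y) = h x - h y := by ring
    rwa [heq] at hmain
  have part2 : ∀ x y : EuclideanSpace ℝ (Fin 3), ‖x‖ = 1 → ‖y‖ = 1 →
      |rfun α ξ h x - rfun α ξ h y| ≤ 3 * |h x - h y| := by
    intro x y hx hy
    have := keyr x y hx hy
    nlinarith [abs_nonneg (h x - h y)]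
  -- phi Lipschitz
  have part3a : ∀ x y : EuclideanSpace ℝ (Fin 3), ‖x‖ = 1 → ‖y‖ = 1 →
      ‖phifun α ξ h x - phifun α ξ h y‖ ≤ 6 * |h x - h y| := by
    intro x y hx hy
    have hdiff : phifun α ξ h x - phifun α ξ h y =
        ((1 + h x)⁻¹ * rfun α ξ h x - (1 + h y)⁻¹ * rfun α ξ h y) • ξ
          - ((1 + h x)⁻¹ - (1 + h y)⁻¹) • α := by
      rw [phifun, phifun, smul_sub, smul_sub, smul_smul, smul_smul, sub_smul, sub_smul]
      abel
    rw [hdiff]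
    have hb1 : ‖((1 + h x)⁻¹ * rfun α ξ h x - (1 + h y)⁻¹ * rfun α ξ h y) • ξ
          - ((1 + h x)⁻¹ - (1 + h y)⁻¹) • α‖ ≤
        |(1 + h x)⁻¹ * rfun α ξ h x - (1 + h y)⁻¹ * rfun α ξ h y|
          + |(1 + h x)⁻¹ - (1 + h y)⁻¹| * ‖α‖ := by
      calc ‖((1 + h x)⁻¹ * rfun α ξ h x - (1 + h y)⁻¹ * rfun α ξ h y) • ξ
            - ((1 + h x)⁻¹ - (1 + h y)⁻¹) • α‖
          ≤ ‖((1 + h x)⁻¹ * rfun α ξ h x - (1 + h y)⁻¹ * rfun α ξ h y) • ξ‖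
            + ‖((1 + h x)⁻¹ - (1 + h y)⁻¹) • α‖ := norm_sub_le _ _
        _ = |(1 + h x)⁻¹ * rfun α ξ h x - (1 + h y)⁻¹ * rfun α ξ h y|
            + |(1 + h x)⁻¹ - (1 + h y)⁻¹| * ‖α‖ := by
            rw [norm_smul, norm_smul, hξ, Real.norm_eq_abs, Real.norm_eq_abs, mul_one]
    have hrr : |rfun α ξ h x - rfun α ξ h y| ≤ (14/9) * |(1 + h x) - (1 + h y)| := by
      rw [show (1 + h x) - (1 + h y) = h x - h y by ring]
      exact keyr x y hx hy
    have hmain := aux_philip (ht x hx).1 (ht x hx).2 (ht y hy).1 (ht y hy).2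
      (hr y hy).1 (hr y hy).2 hα0 hα.le hrr
    rw [show (1 + h x) - (1 + h y) = h x - h y by ring] at hmain
    linarith
  have part3 : ∀ x y : EuclideanSpace ℝ (Fin 3), ‖x‖ = 1 → ‖y‖ = 1 →
      ‖phifun α ξ h x - phifun α ξ h y‖ ≤ 6 * |h x - h y| ∧
      ‖phifun α ξ h x - phifun α ξ h y‖ ≤ 6 * L * ‖x - y‖ := by
    intro x y hx hy
    refine ⟨part3a x y hx hy, ?_⟩
    calc ‖phifun α ξ h x - phifun α ξ h y‖ ≤ 6 * |h x - h y| := part3a x y hx hy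
      _ ≤ 6 * (L * ‖x - y‖) := by linarith [hL x y hx hy]
      _ = 6 * L * ‖x - y‖ := by ring
  refine ⟨part1, part2, part3, ?_⟩
  -- fixed point
  intro h6L
  have hL0 : 0 ≤ L := by
    have hmξ : ‖(-ξ : EuclideanSpace ℝ (Fin 3))‖ = 1 := by rwa [norm_neg]
    have h2 : ‖ξ - (-ξ)‖ = 2 := by
      rw [sub_neg_eq_add]
      rw [← two_smul ℝ ξ, norm_smul, hξ]
      norm_num
    have := hL ξ (-ξ) hξ hmξ
    rw [h2] at this
    nlinarith [abs_nonneg (h ξ - h (-ξ))]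
  have hclosed : IsClosed {x : EuclideanSpace ℝ (Fin 3) | ‖x‖ = 1} :=
    isClosed_eq continuous_norm continuous_const
  haveI : CompleteSpace {x : EuclideanSpace ℝ (Fin 3) // ‖x‖ = 1} := hclosed.completeSpace_coe
  haveI : Nonempty {x : EuclideanSpace ℝ (Fin 3) // ‖x‖ = 1} := ⟨⟨ξ, hξ⟩⟩
  set f : {x : EuclideanSpace ℝ (Fin 3) // ‖x‖ = 1} → {x : EuclideanSpace ℝ (Fin 3) // ‖x‖ = 1} :=
    fun p => ⟨phifun α ξ h p.1, part1 p.1 p.2⟩ with hf_def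
  have hlip : LipschitzWith (6*L).toNNReal f := by
    rw [lipschitzWith_iff_dist_le_mul]
    intro p q
    have hd : dist (f p) (f q) = ‖phifun α ξ h p.1 - phifun α ξ h q.1‖ := by
      rw [hf_def, Subtype.dist_eq, dist_eq_norm]
    have hd2 : dist p q = ‖p.1 - q.1‖ := by rw [Subtype.dist_eq, dist_eq_norm]
    rw [hd, hd2, Real.coe_toNNReal _ (by positivity : (0:ℝ) ≤ 6*L)]
    exact (part3 p.1 q.1 p.2 q.2).2
  have hcon : ContractingWith (6*L).toNNReal f :=
    ⟨by rw [← NNReal.coe_lt_one, Real.coe_toNNReal _ (by positivity : (0:ℝ) ≤ 6*L)]; exact h6L,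
      hlip⟩
  refine ⟨(hcon.fixedPoint f).1, ⟨(hcon.fixedPoint f).2, ?_⟩, ?_⟩
  · exact congrArg Subtype.val hcon.fixedPoint_isFixedPt
  · rintro y ⟨hy1, hy2⟩
    have hfix : f ⟨y, hy1⟩ = ⟨y, hy1⟩ := Subtype.ext hy2
    exact congrArg Subtype.val (hcon.fixedPoint_unique hfix)
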